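/- Consider the two-layer network loss f(W) = (1/(4n)) Σ_{j=1}^n (Σ_{i=1}^r a_i (w_i^T x_j)² − y_j)², with a_i = 1 for i ≤ r/2 and a_i = −1 for i > r/2, and r ≥ 2d+2. Define M(W) = (1/n) Σ_j δ_j x_j x_j^T where δ_j = Σ_i a_i(w_i^T x_j)² − y_j. Then the smallest eigenvalue of the Hessian ∇²f(W) (as a quadratic form on ℝ^{d×r}, restricted to unit Frobenius norm) equals −max_i |λ_i(M)|, the negative of the spectral radius of M. -/

import Mathlib

open Finset

open RealInnerProductSpace

lemma ip_eq {d : ℕ} (w u : EuclideanSpace ℝ (Fin d)) :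
    ⟪w, u⟫ = ∑ k, w k * u k := by
  simp [PiLp.inner_apply, RCLike.inner_apply]
  exact Finset.sum_congr rfl fun _ _ => mul_comm _ _

lemma quad_abs_le {d : ℕ} (M : Matrix (Fin d) (Fin d) ℝ) (hMh : M.IsHermitian)
    {m : ℝ} (hm : ∀ i, |hMh.eigenvalues i| ≤ m) (z : Fin d → ℝ) :
    |∑ k1, ∑ k2, z k1 * M k1 k2 * z k2| ≤ m * ∑ k, z k ^ 2 := by
  set B := hMh.eigenvectorBasis with hB
  set μ := hMh.eigenvalues with hμ
  have hsymm : ∀ k l, M k l = M l k := by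
    intro k l
    have := hMh.apply l k
    simpa using this
  set zE : EuclideanSpace ℝ (Fin d) := WithLp.toLp 2 z with hzE
  set Mz : EuclideanSpace ℝ (Fin d) := WithLp.toLp 2 (M.mulVec z) with hMz
  have hq : ∑ k1, ∑ k2, z k1 * M k1 k2 * z k2 = ⟪zE, Mz⟫ := by
    rw [show ⟪zE, Mz⟫ = ∑ k, z k * (M.mulVec z) k from ip_eq _ _]
    refine Finset.sum_congr rfl fun k1 _ => ?_
    simp [Matrix.mulVec, dotProduct, Finset.mul_sum, mul_assoc]
  have hBMz : ∀ i, ⟪(B i), Mz⟫ = μ i * ⟪zE, B i⟫ := by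
    intro i
    have hMB : M.mulVec (B i) = μ i • (B i) := hMh.mulVec_eigenvectorBasis i
    rw [show ⟪(B i), Mz⟫ = ∑ k, (B i) k * (M.mulVec z) k from ip_eq _ _]
    rw [show ⟪zE, (B i)⟫ = ∑ k, z k * (B i) k from ip_eq _ _]
    calc ∑ k, (B i) k * (M.mulVec z) k
        = ∑ k, ∑ l, (B i) k * (M k l * z l) := by
          simp [Matrix.mulVec, dotProduct, Finset.mul_sum]
      _ = ∑ l, (∑ k, M l k * (B i) k) * z l := by
          rw [Finset.sum_comm]
          refine Finset.sum_congr rfl fun l _ => ?_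
          rw [Finset.sum_mul]
          exact Finset.sum_congr rfl fun k _ => by rw [hsymm k l]; ring
      _ = ∑ l, (μ i * (B i) l) * z l := by
          refine Finset.sum_congr rfl fun l _ => ?_
          have := congrFun hMB l
          simp only [Matrix.mulVec, dotProduct, Pi.smul_apply, smul_eq_mul] at this
          rw [this]
      _ = μ i * ∑ k, z k * (B i) k := by rw [Finset.mul_sum]; exact Finset.sum_congr rfl fun k _ => by ring
  have hpars : ∑ i, ⟪zE, B i⟫ * ⟪zE, B i⟫ = ∑ k, z k ^ 2 := by
    have h := B.sum_inner_mul_inner zE zE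
    rw [show ⟪zE, zE⟫ = ∑ k, z k * z k from ip_eq _ _] at h
    calc ∑ i, ⟪zE, B i⟫ * ⟪zE, B i⟫ = ∑ i, ⟪zE, B i⟫ * ⟪B i, zE⟫ := by
          refine Finset.sum_congr rfl fun i _ => by rw [real_inner_comm zE (B i)]
      _ = ∑ k, z k ^ 2 := by rw [h]; exact Finset.sum_congr rfl fun k _ => (sq (z k)).symm ▸ by ring
  have hexp : ⟪zE, Mz⟫ = ∑ i, μ i * (⟪zE, B i⟫ * ⟪zE, B i⟫) := by
    have h := B.sum_inner_mul_inner zE Mz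
    rw [← h]
    refine Finset.sum_congr rfl fun i _ => ?_
    rw [hBMz i]; ring
  rw [hq, hexp]
  calc |∑ i, μ i * (⟪zE, B i⟫ * ⟪zE, B i⟫)| ≤ ∑ i, |μ i * (⟪zE, B i⟫ * ⟪zE, B i⟫)| :=
        Finset.abs_sum_le_sum_abs _ _
    _ ≤ ∑ i, m * (⟪zE, B i⟫ * ⟪zE, B i⟫) := by
        refine Finset.sum_le_sum fun i _ => ?_
        rw [abs_mul]
        have h1 : |⟪zE, B i⟫ * ⟪zE, B i⟫| = ⟪zE, B i⟫ * ⟪zE, B i⟫ := abs_mul_self _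
        rw [h1]
        exact mul_le_mul_of_nonneg_right (hm i) (mul_self_nonneg _)
    _ = m * ∑ k, z k ^ 2 := by rw [← Finset.mul_sum, hpars]


lemma exists_c {d r : ℕ} (a : Fin r → ℝ) (W : Fin r → Fin d → ℝ) (ε : ℝ)
    (φ : Fin (d+1) → Fin r) (hφi : Function.Injective φ) (hφa : ∀ t, a (φ t) = ε) :
    ∃ c : Fin r → ℝ, (∀ i, c i ≠ 0 → a i = ε) ∧ (∑ i, c i ^ 2 = 1) ∧
      ∀ k, ∑ i, c i * W i k = 0 := by
  have hnli : ¬ LinearIndependent ℝ (fun t : Fin (d+1) => W (φ t)) := by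
    intro h
    have h2 := h.fintype_card_le_finrank
    rw [Module.finrank_fin_fun, Fintype.card_fin] at h2
    omega
  obtain ⟨g, hg, t0, ht0⟩ := Fintype.not_linearIndependent_iff.mp hnli
  set s : ℝ := ∑ t, g t ^ 2 with hs
  have hspos : 0 < s :=
    Finset.sum_pos' (fun t _ => sq_nonneg _) ⟨t0, Finset.mem_univ _, by positivity⟩
  set c : Fin r → ℝ := fun i => ∑ t, if φ t = i then g t / Real.sqrt s else 0 with hc
  have hcφ : ∀ t, c (φ t) = g t / Real.sqrt s := by
    intro t
    simp [hc, hφi.eq_iff]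
  have hsplit : ∀ F : Fin r → ℝ, ∑ i, c i * F i = ∑ t, (g t / Real.sqrt s) * F (φ t) := by
    intro F
    calc ∑ i, c i * F i = ∑ i, ∑ t, (if φ t = i then (g t / Real.sqrt s) * F i else 0) := by
          refine Finset.sum_congr rfl fun i _ => ?_
          rw [hc]
          simp only [Finset.sum_mul, ite_mul, zero_mul]
      _ = ∑ t, ∑ i, (if φ t = i then (g t / Real.sqrt s) * F i else 0) := Finset.sum_comm
      _ = ∑ t, (g t / Real.sqrt s) * F (φ t) := by
          refine Finset.sum_congr rfl fun t _ => ?_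
          rw [Finset.sum_ite_eq]
          simp
  refine ⟨c, ?_, ?_, ?_⟩
  · intro i hne
    obtain ⟨t, _, hterm⟩ := Finset.exists_ne_zero_of_sum_ne_zero (by simpa [hc] using hne)
    by_cases hpt : φ t = i
    · rw [← hpt, hφa]
    · simp [hpt] at hterm
  · have := hsplit c
    simp only [← sq] at this
    calc ∑ i, c i ^ 2 = ∑ t, (g t / Real.sqrt s) * c (φ t) := by
          rw [← hsplit c]
          exact Finset.sum_congr rfl fun i _ => (sq (c i))
      _ = ∑ t, g t ^ 2 / s := by
          refine Finset.sum_congr rfl fun t _ => ?_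
          rw [hcφ t, div_mul_div_comm, ← sq, ← sq, Real.sq_sqrt hspos.le]
      _ = 1 := by rw [← Finset.sum_div, ← hs, div_self hspos.ne']
  · intro k
    rw [hsplit (fun i => W i k)]
    have h0 : ∑ t, g t * W (φ t) k = 0 := by
      have := congrFun hg k
      simpa [Finset.sum_apply] using this
    calc ∑ t, (g t / Real.sqrt s) * W (φ t) k
        = (Real.sqrt s)⁻¹ * ∑ t, g t * W (φ t) k := by
          rw [Finset.mul_sum]
          exact Finset.sum_congr rfl fun t _ => by rw [div_eq_inv_mul]; ring
      _ = 0 := by rw [h0, mul_zero]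

/-- For the two-layer quadratic-activation loss with `r ≥ 2d+2`, the smallest eigenvalue of
the Hessian `∇²f(W)` — i.e. the minimum of the Hessian quadratic form over `‖Z‖_F = 1` —
equals `−max_i |λ_i(M)|`, where `M = (1/n)∑_j δ_j x_j x_jᵀ`. -/
theorem stmt_10 (d r n : ℕ) (hd : 0 < d) (hn : 0 < n)
    (hr : 2 * d + 2 ≤ r) (hre : Even r)
    (a : Fin r → ℝ) (ha : ∀ i, a i = if (i : ℕ) < r / 2 then 1 else -1)
    (x : Fin n → Fin d → ℝ) (y : Fin n → ℝ) (W : Fin r → Fin d → ℝ)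
    (δ : Fin n → ℝ)
    (hδ : ∀ j, δ j = (∑ i, a i * (∑ k, W i k * x j k) ^ 2) - y j)
    (M : Matrix (Fin d) (Fin d) ℝ)
    (hM : ∀ k l, M k l = (1 / (n : ℝ)) * ∑ j, δ j * x j k * x j l)
    (hMh : M.IsHermitian)
    (Q : (Fin r → Fin d → ℝ) → ℝ)
    (hQ : ∀ Z, Q Z = (∑ k, a k * ∑ k1, ∑ k2, Z k k1 * M k1 k2 * Z k k2)
      + (2 / (n : ℝ)) * ∑ j,
          (∑ i, a i * (∑ k, W i k * x j k) * (∑ k, x j k * Z i k)) ^ 2) :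
    IsLeast {q : ℝ | ∃ Z : Fin r → Fin d → ℝ,
        Real.sqrt (∑ i, ∑ k, Z i k ^ 2) = 1 ∧ q = Q Z}
      (-(Finset.univ.sup' (Finset.univ_nonempty_iff.mpr ⟨⟨0, hd⟩⟩)
          fun i : Fin d => |hMh.eigenvalues i|)) := by
  set m := Finset.univ.sup' (Finset.univ_nonempty_iff.mpr ⟨⟨0, hd⟩⟩)
      (fun i : Fin d => |hMh.eigenvalues i|) with hmdef
  have hmle : ∀ i, |hMh.eigenvalues i| ≤ m := fun i =>
    Finset.le_sup' (fun i : Fin d => |hMh.eigenvalues i|) (Finset.mem_univ i)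
  obtain ⟨i₀, _, hi₀⟩ := Finset.exists_mem_eq_sup'
    (Finset.univ_nonempty_iff.mpr ⟨⟨0, hd⟩⟩) (fun i : Fin d => |hMh.eigenvalues i|)
  set μ0 := hMh.eigenvalues i₀ with hμ0
  set v : Fin d → ℝ := (hMh.eigenvectorBasis i₀).ofLp with hv
  obtain ⟨t', ht'⟩ := hre
  have hhalf : d + 1 ≤ r / 2 := by omega
  -- norm of v
  have hv2 : ∑ k, v k ^ 2 = 1 := by
    have h1 : ‖hMh.eigenvectorBasis i₀‖ = 1 := hMh.eigenvectorBasis.orthonormal.1 i₀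
    rw [EuclideanSpace.norm_eq] at h1
    have h2 := Real.sqrt_eq_one.mp h1
    simpa [sq_abs] using h2
  -- quadratic value at v
  have hvMv : ∑ k1, ∑ k2, v k1 * M k1 k2 * v k2 = μ0 := by
    have hMB : M.mulVec v = μ0 • v := hMh.mulVec_eigenvectorBasis i₀
    calc ∑ k1, ∑ k2, v k1 * M k1 k2 * v k2 = ∑ k1, v k1 * (M.mulVec v) k1 := by
          refine Finset.sum_congr rfl fun k1 _ => ?_
          simp [Matrix.mulVec, dotProduct, Finset.mul_sum, mul_assoc]
      _ = μ0 * ∑ k, v k ^ 2 := by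
          rw [hMB, Finset.mul_sum]
          exact Finset.sum_congr rfl fun k _ => by simp [PiLp.smul_apply]; ring
      _ = μ0 := by rw [hv2, mul_one]
  constructor
  · -- membership
    set ε : ℝ := if 0 ≤ μ0 then -1 else 1 with hε
    have hεμ : ε * μ0 = -m := by
      rw [hmdef, hi₀, hε]
      rcases le_or_gt 0 μ0 with h | h
      · rw [if_pos h, abs_of_nonneg h]; ring
      · rw [if_neg (not_le.mpr h), abs_of_neg h]; ring
    -- construct the injection φ into the half with sign ε
    have hφ : ∃ φ : Fin (d+1) → Fin r, Function.Injective φ ∧ ∀ t, a (φ t) = ε := by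
      rcases le_or_gt 0 μ0 with h | h
      · refine ⟨fun t => ⟨r / 2 + t.1, by have := t.2; omega⟩, ?_, ?_⟩
        · intro t1 t2 h12
          have := congrArg Fin.val h12
          simp only at this
          exact Fin.ext (by omega)
        · intro t
          have hval : ((⟨r / 2 + t.1, by have := t.2; omega⟩ : Fin r) : ℕ) = r / 2 + t.1 := rfl
          rw [ha, hε, if_pos h, if_neg (by rw [hval]; omega)]
      · refine ⟨fun t => ⟨t.1, by have := t.2; omega⟩, ?_, ?_⟩
        · intro t1 t2 h12
          have := congrArg Fin.val h12
          simp only at this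
          exact Fin.ext this
        · intro t
          have hval : ((⟨t.1, by have := t.2; omega⟩ : Fin r) : ℕ) = t.1 := rfl
          rw [ha, hε, if_neg (not_le.mpr h), if_pos (by rw [hval]; have := t.2; omega)]
    obtain ⟨φ, hφi, hφa⟩ := hφ
    obtain ⟨c, hsupp, hc2, hrel⟩ := exists_c a W ε φ hφi hφa
    have hac : ∀ i, a i * c i = ε * c i := by
      intro i
      by_cases h : c i = 0
      · rw [h, mul_zero, mul_zero]
      · rw [hsupp i h]
    refine ⟨fun i k => c i * v k, ?_, ?_⟩
    · have : ∑ i, ∑ k, (c i * v k) ^ 2 = 1 := by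
        calc ∑ i, ∑ k, (c i * v k) ^ 2 = ∑ i, c i ^ 2 * ∑ k, v k ^ 2 := by
              refine Finset.sum_congr rfl fun i _ => ?_
              rw [Finset.mul_sum]
              exact Finset.sum_congr rfl fun k _ => by ring
          _ = 1 := by
              simp only [hv2, mul_one]
              exact hc2
      rw [this, Real.sqrt_one]
    · rw [hQ]
      have hterm1 : ∑ k, a k * ∑ k1, ∑ k2, (c k * v k1) * M k1 k2 * (c k * v k2) = -m := by
        calc ∑ k, a k * ∑ k1, ∑ k2, (c k * v k1) * M k1 k2 * (c k * v k2)
            = ∑ k, a k * (c k ^ 2 * μ0) := by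
              refine Finset.sum_congr rfl fun k _ => ?_
              congr 1
              rw [← hvMv, Finset.mul_sum]
              refine Finset.sum_congr rfl fun k1 _ => ?_
              rw [Finset.mul_sum]
              exact Finset.sum_congr rfl fun k2 _ => by ring
          _ = (ε * μ0) * ∑ k, c k ^ 2 := by
              rw [Finset.mul_sum]
              refine Finset.sum_congr rfl fun k _ => ?_
              have h := hac k
              by_cases h0 : c k = 0
              · rw [h0]; ring
              · rw [hsupp k h0]; ring
          _ = -m := by rw [hc2, mul_one, hεμ]
      have hterm2 : ∀ j : Fin n,
          (∑ i, a i * (∑ k, W i k * x j k) * (∑ k, x j k * (c i * v k))) = 0 := by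
        intro j
        have hws : ∑ i, c i * ∑ k, W i k * x j k = 0 := by
          calc ∑ i, c i * ∑ k, W i k * x j k
              = ∑ i, ∑ k, c i * W i k * x j k := by
                refine Finset.sum_congr rfl fun i _ => ?_
                rw [Finset.mul_sum]
                exact Finset.sum_congr rfl fun k _ => by ring
            _ = ∑ k, (∑ i, c i * W i k) * x j k := by
                rw [Finset.sum_comm]
                exact Finset.sum_congr rfl fun k _ => by rw [Finset.sum_mul]
            _ = 0 := by
                refine Finset.sum_eq_zero fun k _ => ?_
                rw [hrel k, zero_mul]
        calc ∑ i, a i * (∑ k, W i k * x j k) * (∑ k, x j k * (c i * v k))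
            = ∑ i, (ε * (∑ k, x j k * v k)) * (c i * ∑ k, W i k * x j k) := by
              refine Finset.sum_congr rfl fun i _ => ?_
              have hxv : ∑ k, x j k * (c i * v k) = c i * ∑ k, x j k * v k := by
                rw [Finset.mul_sum]
                exact Finset.sum_congr rfl fun k _ => by ring
              rw [hxv]
              by_cases h0 : c i = 0
              · rw [h0]; ring
              · rw [hsupp i h0]; ring
          _ = (ε * (∑ k, x j k * v k)) * ∑ i, c i * ∑ k, W i k * x j k :=
              (Finset.mul_sum _ _ _).symm
          _ = 0 := by rw [hws, mul_zero]
      rw [hterm1]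
      have : ∑ j, (∑ i, a i * (∑ k, W i k * x j k) * (∑ k, x j k * (c i * v k))) ^ 2 = 0 :=
        Finset.sum_eq_zero fun j _ => by rw [hterm2 j]; exact zero_pow two_ne_zero
      rw [this, mul_zero, add_zero]
  · -- lower bound
    rintro q ⟨Z, hZn, rfl⟩
    have hZ1 : ∑ i, ∑ k, Z i k ^ 2 = 1 := Real.sqrt_eq_one.mp hZn
    rw [hQ]
    have ht2 : 0 ≤ (2 / (n : ℝ)) * ∑ j,
        (∑ i, a i * (∑ k, W i k * x j k) * (∑ k, x j k * Z i k)) ^ 2 :=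
      mul_nonneg (by positivity) (Finset.sum_nonneg fun j _ => sq_nonneg _)
    have ht1 : -m ≤ ∑ k, a k * ∑ k1, ∑ k2, Z k k1 * M k1 k2 * Z k k2 := by
      have hstep : ∀ k : Fin r, -(m * ∑ k1, Z k k1 ^ 2)
          ≤ a k * ∑ k1, ∑ k2, Z k k1 * M k1 k2 * Z k k2 := by
        intro k
        have habs := quad_abs_le M hMh hmle (Z k)
        have h1 : |a k| = 1 := by rw [ha]; split <;> norm_num
        calc -(m * ∑ k1, Z k k1 ^ 2) ≤ -|∑ k1, ∑ k2, Z k k1 * M k1 k2 * Z k k2| :=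
              neg_le_neg habs
          _ = -|a k * ∑ k1, ∑ k2, Z k k1 * M k1 k2 * Z k k2| := by
              rw [abs_mul, h1, one_mul]
          _ ≤ a k * ∑ k1, ∑ k2, Z k k1 * M k1 k2 * Z k k2 := neg_abs_le _
      have hsum : ∑ k : Fin r, -(m * ∑ k1, Z k k1 ^ 2) = -m := by
        rw [Finset.sum_neg_distrib, ← Finset.mul_sum, hZ1, mul_one]
      calc -m = ∑ k : Fin r, -(m * ∑ k1, Z k k1 ^ 2) := hsum.symm
        _ ≤ _ := Finset.sum_le_sum fun k _ => hstep k
    linarith
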